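/- Suppose for each 1 ≤ i < j ≤ n we have scalars α_{i,j}, β_{i,j} ∈ K such that Σ_{1≤i<j≤n}(α_{i,j}ℓᵢ + β_{i,j}ℓⱼ)f_{i,j} = 0, where ℓ₁,...,ℓₙ are pairwise coprime linear forms and f_{i,j} = ∏_{u∉{i,j}}ℓ_u. Then setting fᵢ := ∏_{u≠i}ℓ_u, one has Σ_{i=1}^n (Σ_{u<i} α_{u,i} + Σ_{v>i} β_{i,v}) fᵢ = 0, and moreover each coefficient Σ_{u<i} α_{u,i} + Σ_{v>i} β_{i,v} equals 0. -/

import Mathlib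

open MvPolynomial Finset

lemma deg1_single {σ : Type*} [DecidableEq σ] {d : σ →₀ ℕ} (hd : d.degree = 1) :
    ∃ j, d = Finsupp.single j 1 := by
  have hd0 : d ≠ 0 := by
    intro h; rw [h, map_zero] at hd; exact one_ne_zero hd.symm
  obtain ⟨j, hj⟩ := Finsupp.support_nonempty_iff.2 hd0
  have hj0 : d j ≠ 0 := Finsupp.mem_support_iff.1 hj
  have hdj : d j = 1 := le_antisymm (hd ▸ Finsupp.le_degree j d)
    (Nat.one_le_iff_ne_zero.2 hj0)
  refine ⟨j, (Finsupp.support_eq_singleton.1 ?_).2.trans (by rw [hdj])⟩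
  by_contra hs
  obtain ⟨x, hx, hxj⟩ : ∃ x ∈ d.support, x ≠ j := by
    by_contra h
    push_neg at h
    exact hs (Finset.eq_singleton_iff_unique_mem.2 ⟨hj, h⟩)
  have hx0 : d x ≠ 0 := Finsupp.mem_support_iff.1 hx
  have hsub : ({j, x} : Finset σ) ⊆ d.support := by
    intro y hy
    rcases Finset.mem_insert.1 hy with rfl | hy
    · exact hj
    · rwa [Finset.mem_singleton.1 hy]
  have h2 : d j + d x ≤ d.degree := by
    rw [Finsupp.degree]
    calc d j + d x = ∑ y ∈ ({j, x} : Finset σ), d y := by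
          rw [Finset.sum_insert (by simpa using (Ne.symm hxj)), Finset.sum_singleton]
      _ ≤ _ := Finset.sum_le_sum_of_subset hsub
  omega

lemma homog1_eq {K : Type*} [CommSemiring K] {k : ℕ} {p : MvPolynomial (Fin k) K}
    (hp : p.IsHomogeneous 1) :
    p = ∑ j : Fin k, C (coeff (Finsupp.single j 1) p) * X j := by
  ext d
  rw [coeff_sum]
  simp only [coeff_C_mul, coeff_X']
  by_cases hd : d.degree = 1
  · obtain ⟨j0, rfl⟩ := deg1_single hd
    rw [Finset.sum_eq_single j0 (fun b _ hb => by
        rw [if_neg fun hh => hb (Finsupp.single_left_injective one_ne_zero hh), mul_zero])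
      (fun h => absurd (Finset.mem_univ _) h)]
    simp
  · rw [hp.coeff_eq_zero hd]
    refine (Finset.sum_eq_zero fun j _ => ?_).symm
    rw [if_neg, mul_zero]
    intro h
    exact hd (h ▸ by simp [Finsupp.degree_single])

lemma homog1_eval {K : Type*} [CommSemiring K] {k : ℕ} {p : MvPolynomial (Fin k) K}
    (hp : p.IsHomogeneous 1) (x : Fin k → K) :
    eval x p = ∑ j : Fin k, coeff (Finsupp.single j 1) p * x j := by
  conv_lhs => rw [homog1_eq hp]
  simp

section Eval
variable {K : Type*} [Field K] [CharZero K] {k n : ℕ}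

lemma exists_eval_pt (ℓ : Fin n → MvPolynomial (Fin k) K)
    (hhom : ∀ i, (ℓ i).IsHomogeneous 1)
    (hne : ∀ i, ℓ i ≠ 0)
    (hprop : ∀ i j : Fin n, i ≠ j → ∀ c : K, ℓ i ≠ c • ℓ j) (i : Fin n) :
    ∃ x : Fin k → K, eval x (ℓ i) = 0 ∧ ∀ u, u ≠ i → eval x (ℓ u) ≠ 0 := by
  classical
  set L : Fin n → ((Fin k → K) →ₗ[K] K) := fun u =>
    ∑ j, (coeff (Finsupp.single j 1) (ℓ u)) • LinearMap.proj j with hLdef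
  have hL : ∀ u x, L u x = eval x (ℓ u) := by
    intro u x
    rw [homog1_eval (hhom u) x, hLdef]
    simp [LinearMap.proj_apply]
  have hLbasis : ∀ u (j : Fin k), L u (Pi.single j 1) = coeff (Finsupp.single j 1) (ℓ u) := by
    intro u j
    rw [hLdef]
    simp only [LinearMap.sum_apply, LinearMap.smul_apply, LinearMap.proj_apply,
      smul_eq_mul]
    rw [Finset.sum_eq_single j (fun b _ hb => by
        rw [Pi.single_eq_of_ne hb, mul_zero])
      (fun h => absurd (Finset.mem_univ _) h)]
    simp
  have transfer : ∀ u v (c : K), (∀ x, L u x = c * L v x) → ℓ u = c • ℓ v := by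
    intro u v c h
    rw [homog1_eq (hhom u), homog1_eq (hhom v), Finset.smul_sum]
    refine Finset.sum_congr rfl fun j _ => ?_
    rw [← hLbasis u j, ← hLbasis v j, h, smul_eq_C_mul, ← mul_assoc, ← C_mul]
  have hLi0 : ∃ x₀, L i x₀ ≠ 0 := by
    by_contra h
    push_neg at h
    refine hne i ?_
    rw [homog1_eq (hhom i)]
    refine Finset.sum_eq_zero fun j _ => ?_
    rw [← hLbasis i j, h, map_zero, zero_mul]
  obtain ⟨x₀, hx₀⟩ := hLi0
  by_contra hcon
  push_neg at hcon
  have hsub : (LinearMap.ker (L i) : Set (Fin k → K)) ⊆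
      ⋃ u ∈ Finset.univ.erase i, (LinearMap.ker (L u) : Set (Fin k → K)) := by
    intro x hx
    have h0 : eval x (ℓ i) = 0 := by rw [← hL]; exact hx
    obtain ⟨u, hu, hu0⟩ := hcon x h0
    exact Set.mem_biUnion (Finset.mem_erase.2 ⟨hu, Finset.mem_univ u⟩)
      (LinearMap.mem_ker.2 ((hL u x).trans hu0))
  -- work inside E := ker (L i)
  set E := LinearMap.ker (L i)
  set p : Fin n → Submodule K E := fun u =>
    (LinearMap.ker (L u)).comap E.subtype with hpdef
  have hcov : ⋃ q ∈ (Finset.univ.erase i).image p, (q : Set E) = Set.univ := by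
    refine Set.eq_univ_of_forall fun e => ?_
    obtain ⟨_, ⟨u, rfl⟩, _, ⟨hu, rfl⟩, he⟩ := hsub e.2
    exact Set.mem_biUnion (Finset.mem_image_of_mem p hu) he
  have htop := Subspace.top_mem_of_biUnion_eq_univ hcov
  obtain ⟨u, hu, hpu⟩ := Finset.mem_image.1 htop
  have hui : u ≠ i := (Finset.mem_erase.1 hu).1
  have hker : ∀ x, L i x = 0 → L u x = 0 := by
    intro x hx
    have : (⟨x, LinearMap.mem_ker.2 hx⟩ : E) ∈ p u := hpu ▸ Submodule.mem_top
    simpa [hpdef] using this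
  -- derive proportionality
  set c : K := L u x₀ / L i x₀ with hcdef
  refine hprop u i hui c (transfer u i c fun y => ?_)
  have hz : L i (y - (L i y / L i x₀) • x₀) = 0 := by
    rw [map_sub, map_smul, smul_eq_mul, div_mul_cancel₀ _ hx₀, sub_self]
  have := hker _ hz
  rw [map_sub, map_smul, smul_eq_mul, sub_eq_zero] at this
  rw [this, hcdef]
  field_simp

end Eval

/-- If `Σ_{i<j} (α_{i,j} ℓᵢ + β_{i,j} ℓⱼ) f_{i,j} = 0` with scalar coefficients, then the
induced scalar syzygy `Σᵢ (Σ_{u<i} α_{u,i} + Σ_{v>i} β_{i,v}) fᵢ = 0` on the generators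
`fᵢ = ∏_{u≠i} ℓ_u` of `I_{n-1}` holds, and each of its coefficients vanishes. -/
theorem stmt12 {K : Type*} [Field K] [CharZero K] {k n : ℕ}
    (ℓ : Fin n → MvPolynomial (Fin k) K)
    (hhom : ∀ i, (ℓ i).IsHomogeneous 1)
    (hne : ∀ i, ℓ i ≠ 0)
    (hprop : ∀ i j : Fin n, i ≠ j → ∀ c : K, ℓ i ≠ c • ℓ j)
    (f : Fin n → Fin n → MvPolynomial (Fin k) K)
    (hf : ∀ i j, f i j = ∏ u ∈ (Finset.univ \ {i, j}), ℓ u)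
    (g : Fin n → MvPolynomial (Fin k) K)
    (hg : ∀ i, g i = ∏ u ∈ (Finset.univ \ {i}), ℓ u)
    (α β : Fin n → Fin n → K)
    (hsyz : ∑ p ∈ Finset.univ.filter (fun p : Fin n × Fin n => p.1 < p.2),
      (α p.1 p.2 • ℓ p.1 + β p.1 p.2 • ℓ p.2) * f p.1 p.2 = 0) :
    (∑ i : Fin n,
        ((∑ u ∈ Finset.univ.filter (· < i), α u i)
          + ∑ v ∈ Finset.univ.filter (i < ·), β i v) • g i = 0)
    ∧ ∀ i : Fin n,
        (∑ u ∈ Finset.univ.filter (· < i), α u i)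
          + ∑ v ∈ Finset.univ.filter (i < ·), β i v = 0 := by
  classical
  have key : ∀ i j : Fin n, i ≠ j → ℓ i * f i j = g j := by
    intro i j hij
    rw [hf, hg]
    have hset : (Finset.univ \ ({i, j} : Finset (Fin n))) = (Finset.univ \ {j}).erase i := by
      ext u
      simp only [Finset.mem_sdiff, Finset.mem_univ, true_and, Finset.mem_erase,
        Finset.mem_insert, Finset.mem_singleton]
      tauto
    rw [hset]
    exact Finset.mul_prod_erase _ _ (by simp [hij])
  have hfsymm : ∀ i j, f i j = f j i := by
    intro i j; rw [hf, hf, Finset.pair_comm]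
  have h1 : ∀ p ∈ Finset.univ.filter (fun p : Fin n × Fin n => p.1 < p.2),
      (α p.1 p.2 • ℓ p.1 + β p.1 p.2 • ℓ p.2) * f p.1 p.2
        = α p.1 p.2 • g p.2 + β p.1 p.2 • g p.1 := by
    intro p hp
    have hlt : p.1 < p.2 := (Finset.mem_filter.1 hp).2
    rw [add_mul, smul_mul_assoc, smul_mul_assoc, key _ _ hlt.ne,
      hfsymm p.1 p.2, key _ _ hlt.ne']
  rw [Finset.sum_congr rfl h1, Finset.sum_add_distrib] at hsyz
  have hA : ∑ p ∈ Finset.univ.filter (fun p : Fin n × Fin n => p.1 < p.2),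
      α p.1 p.2 • g p.2
      = ∑ i : Fin n, ∑ u ∈ Finset.univ.filter (· < i), α u i • g i := by
    exact Finset.sum_finset_product_right _ Finset.univ
      (fun j => Finset.univ.filter (· < j)) (by simp)
  have hB : ∑ p ∈ Finset.univ.filter (fun p : Fin n × Fin n => p.1 < p.2),
      β p.1 p.2 • g p.1
      = ∑ i : Fin n, ∑ v ∈ Finset.univ.filter (i < ·), β i v • g i := by
    exact Finset.sum_finset_product _ Finset.univ
      (fun i => Finset.univ.filter (i < ·)) (by simp)
  have main : ∑ i : Fin n,
      ((∑ u ∈ Finset.univ.filter (· < i), α u i)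
        + ∑ v ∈ Finset.univ.filter (i < ·), β i v) • g i = 0 := by
    calc ∑ i : Fin n,
        ((∑ u ∈ Finset.univ.filter (· < i), α u i)
          + ∑ v ∈ Finset.univ.filter (i < ·), β i v) • g i
        = ∑ i : Fin n, ((∑ u ∈ Finset.univ.filter (· < i), α u i • g i)
            + ∑ v ∈ Finset.univ.filter (i < ·), β i v • g i) := by
          refine Finset.sum_congr rfl fun i _ => ?_
          rw [add_smul, Finset.sum_smul, Finset.sum_smul]
      _ = (∑ i : Fin n, ∑ u ∈ Finset.univ.filter (· < i), α u i • g i)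
            + ∑ i : Fin n, ∑ v ∈ Finset.univ.filter (i < ·), β i v • g i := by
          rw [Finset.sum_add_distrib]
      _ = 0 := by rw [← hA, ← hB]; exact hsyz
  refine ⟨main, fun i => ?_⟩
  obtain ⟨x, hx0, hxne⟩ := exists_eval_pt ℓ hhom hne hprop i
  have hev := congrArg (eval x) main
  rw [map_sum, map_zero] at hev
  simp only [smul_eq_C_mul, map_mul, eval_C] at hev
  have hzero : ∀ j, j ≠ i → eval x (g j) = 0 := by
    intro j hj
    rw [hg, map_prod]
    exact Finset.prod_eq_zero (Finset.mem_sdiff.2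
      ⟨Finset.mem_univ i, by simp [Ne.symm hj]⟩) hx0
  rw [Finset.sum_eq_single i (fun j _ hj => by rw [hzero j hj, mul_zero])
    (fun h => absurd (Finset.mem_univ _) h)] at hev
  have hgi : eval x (g i) ≠ 0 := by
    rw [hg, map_prod]
    refine Finset.prod_ne_zero_iff.2 fun u hu => hxne u ?_
    have := (Finset.mem_sdiff.1 hu).2
    simpa using this
  exact (mul_eq_zero.1 hev).resolve_right hgi
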